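/- arXiv:2211.05326 — 2 statements merged into one kernel-verified Lean document; each statement's English description precedes it below -/
import Mathlib

section
/- Let H be a real Hilbert space and let 𝒯, 𝒜, 𝒫 : H → H be continuous linear operators. Suppose there exist constants ε, α > 0 such that 𝒫 is self-adjoint (𝒫 = 𝒫*), ⟨v, 𝒫v⟩ ≥ ε²‖v‖² for all v ∈ H, and ⟨𝒜v, 𝒫𝒯v⟩ + ⟨𝒯v, 𝒫𝒜v⟩ ≤ −2α⟨𝒯v, 𝒫𝒯v⟩ for all v ∈ H. Set ζ := √‖𝒫‖ (operator norm). Then every differentiable curve v : [0,∞) → H satisfying 𝒯(v′(t)) = 𝒜(v(t)) for all t ≥ 0 obeys ‖𝒯v(t)‖ ≤ (ζ/ε)·‖𝒯v(0)‖·e^{−αt} for all t ≥ 0. (Theorem 5 (stability as an LPI).) -/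
open Set
open scoped RealInnerProductSpace

/-- Theorem 5, stability as an LPI: if `𝒫` is self-adjoint, coercive
(`⟨v,𝒫v⟩ ≥ ε²‖v‖²`) and satisfies the LPI
`⟨𝒜v,𝒫𝒯v⟩ + ⟨𝒯v,𝒫𝒜v⟩ ≤ -2α⟨𝒯v,𝒫𝒯v⟩`, then every differentiable solution of
`𝒯v′(t) = 𝒜v(t)` satisfies `‖𝒯v(t)‖ ≤ (√‖𝒫‖/ε)‖𝒯v(0)‖ e^{-αt}`. -/
theorem statement8 {H : Type*}
    [NormedAddCommGroup H] [InnerProductSpace ℝ H] [CompleteSpace H]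
    (T A P : H →L[ℝ] H) (ε α : ℝ) (hε : 0 < ε) (hα : 0 < α)
    (hPsa : ∀ u w : H, ⟪P u, w⟫ = ⟪u, P w⟫)
    (hPcoer : ∀ u : H, ε ^ 2 * ‖u‖ ^ 2 ≤ ⟪u, P u⟫)
    (hLPI : ∀ u : H, ⟪A u, P (T u)⟫ + ⟪T u, P (A u)⟫ ≤ -(2 * α) * ⟪T u, P (T u)⟫)
    (v : ℝ → H) (hv : DifferentiableOn ℝ v (Ici 0))
    (hsol : ∀ t ∈ Ici (0:ℝ), T (derivWithin v (Ici 0) t) = A (v t)) :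
    ∀ t ∈ Ici (0:ℝ),
      ‖T (v t)‖ ≤ (Real.sqrt ‖P‖ / ε) * ‖T (v 0)‖ * Real.exp (-α * t) := by
  set E : ℝ → ℝ := fun t => ⟪T (v t), P (T (v t))⟫ with hE
  set g : ℝ → ℝ := fun t => E t * Real.exp (2 * α * t) with hg
  -- derivative facts at interior points
  have key : ∀ t ∈ Ioi (0:ℝ), HasDerivAt g
      ((⟪T (v t), P (A (v t))⟫ + ⟪A (v t), P (T (v t))⟫) * Real.exp (2 * α * t)
        + E t * (Real.exp (2 * α * t) * (2 * α))) t := by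
    intro t ht
    have htmem : Ici (0:ℝ) ∈ nhds t := Ici_mem_nhds ht
    have hvt : DifferentiableAt ℝ v t := (hv t (mem_Ici.mpr (le_of_lt ht))).differentiableAt htmem
    have hv' : HasDerivAt v (deriv v t) t := hvt.hasDerivAt
    have hTA : T (deriv v t) = A (v t) := by
      have := hsol t (mem_Ici.mpr (le_of_lt ht))
      rwa [derivWithin_of_mem_nhds htmem] at this
    have hTv : HasDerivAt (fun s => T (v s)) (A (v t)) t := by
      have := T.hasFDerivAt.comp_hasDerivAt t hv'
      rwa [hTA] at this
    have hPTv : HasDerivAt (fun s => P (T (v s))) (P (A (v t))) t :=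
      P.hasFDerivAt.comp_hasDerivAt t hTv
    have hEder : HasDerivAt E (⟪T (v t), P (A (v t))⟫ + ⟪A (v t), P (T (v t))⟫) t :=
      HasDerivAt.inner ℝ hTv hPTv
    have hexp : HasDerivAt (fun s => Real.exp (2 * α * s))
        (Real.exp (2 * α * t) * (2 * α)) t := by
      have h1 : HasDerivAt (fun s : ℝ => 2 * α * s) (2 * α) t := by
        simpa using (hasDerivAt_id t).const_mul (2 * α)
      exact (Real.hasDerivAt_exp (2 * α * t)).comp t h1
    exact hEder.mul hexp
  -- g is antitone on Ici 0
  have hEcont : ContinuousOn E (Ici 0) := by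
    have hvc : ContinuousOn v (Ici 0) := hv.continuousOn
    exact ContinuousOn.inner (T.continuous.comp_continuousOn hvc)
      ((P.continuous.comp T.continuous).comp_continuousOn hvc)
  have hganti : AntitoneOn g (Ici 0) := by
    apply antitoneOn_of_deriv_nonpos (convex_Ici 0)
    · exact hEcont.mul (Real.continuous_exp.comp (by fun_prop)).continuousOn
    · intro t ht
      rw [interior_Ici] at ht
      exact (key t ht).differentiableAt.differentiableWithinAt
    · intro t ht
      rw [interior_Ici] at ht
      rw [(key t ht).deriv]
      have h1 : ⟪T (v t), P (A (v t))⟫ + ⟪A (v t), P (T (v t))⟫ ≤ -(2 * α) * E t := by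
        have := hLPI (v t); linarith
      have hexp_pos : (0:ℝ) < Real.exp (2 * α * t) := Real.exp_pos _
      nlinarith [hexp_pos]
  -- hence E t ≤ E 0 * exp (-2αt)
  intro t ht
  have hgt : g t ≤ g 0 := hganti self_mem_Ici ht ht
  have hexp_pos : (0:ℝ) < Real.exp (2 * α * t) := Real.exp_pos _
  have hEt : E t ≤ E 0 * Real.exp (-(2 * α * t)) := by
    rw [Real.exp_neg, ← div_eq_mul_inv, le_div_iff₀ hexp_pos]
    simpa [hg, mul_zero, Real.exp_zero] using hgt
  -- bound E 0 above
  have hE0 : E 0 ≤ ‖P‖ * ‖T (v 0)‖ ^ 2 := by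
    calc E 0 ≤ ‖T (v 0)‖ * ‖P (T (v 0))‖ := real_inner_le_norm _ _
    _ ≤ ‖T (v 0)‖ * (‖P‖ * ‖T (v 0)‖) := by
        exact mul_le_mul_of_nonneg_left (P.le_opNorm _) (norm_nonneg _)
    _ = ‖P‖ * ‖T (v 0)‖ ^ 2 := by ring
  -- bound E t below
  have hEtlow : ε ^ 2 * ‖T (v t)‖ ^ 2 ≤ E t := hPcoer (T (v t))
  -- combine: (ε ‖T v t‖)² ≤ (√‖P‖ ‖T v 0‖ e^{-αt})²
  have hsq : (ε * ‖T (v t)‖) ^ 2 ≤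
      (Real.sqrt ‖P‖ * ‖T (v 0)‖ * Real.exp (-α * t)) ^ 2 := by
    have hPsq : Real.sqrt ‖P‖ ^ 2 = ‖P‖ := Real.sq_sqrt (norm_nonneg _)
    have hee : Real.exp (-α * t) ^ 2 = Real.exp (-(2 * α * t)) := by
      rw [sq, ← Real.exp_add]; ring_nf
    have hexpos : (0:ℝ) < Real.exp (-(2 * α * t)) := Real.exp_pos _
    calc (ε * ‖T (v t)‖) ^ 2 = ε ^ 2 * ‖T (v t)‖ ^ 2 := by ring
    _ ≤ E t := hEtlow
    _ ≤ E 0 * Real.exp (-(2 * α * t)) := hEt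
    _ ≤ (‖P‖ * ‖T (v 0)‖ ^ 2) * Real.exp (-(2 * α * t)) := by
        exact mul_le_mul_of_nonneg_right hE0 hexpos.le
    _ = (Real.sqrt ‖P‖ * ‖T (v 0)‖ * Real.exp (-α * t)) ^ 2 := by
        rw [mul_pow, mul_pow, hPsq, hee]
  have hle : ε * ‖T (v t)‖ ≤ Real.sqrt ‖P‖ * ‖T (v 0)‖ * Real.exp (-α * t) := by
    have ha : 0 ≤ ε * ‖T (v t)‖ := mul_nonneg hε.le (norm_nonneg _)
    have hb : 0 ≤ Real.sqrt ‖P‖ * ‖T (v 0)‖ * Real.exp (-α * t) :=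
      mul_nonneg (mul_nonneg (Real.sqrt_nonneg _) (norm_nonneg _)) (Real.exp_pos _).le
    nlinarith [hsq]
  rw [div_mul_eq_mul_div, div_mul_eq_mul_div, le_div_iff₀ hε]
  linarith [hle]
end

section
/- Let a < b be reals, m, n ≥ 1 integers, R₀ : [a,b] → ℝ^{m×n} bounded measurable, and R₁, R₂ : [a,b]×[a,b] → ℝ^{m×n} square-integrable. Define the 3-PI operator 𝒫[R] : L²([a,b];ℝⁿ) → L²([a,b];ℝᵐ) by (𝒫[R]u)(x) := R₀(x)u(x) + ∫ₐˣ R₁(x,θ)u(θ)dθ + ∫ₓᵇ R₂(x,θ)u(θ)dθ, and define adjoint parameters R̂₀(x) := R₀(x)ᵀ, R̂₁(x,θ) := R₂(θ,x)ᵀ, R̂₂(x,θ) := R₁(θ,x)ᵀ. Then for all u ∈ L²([a,b];ℝⁿ) and v ∈ L²([a,b];ℝᵐ), ⟨𝒫[R]u, v⟩_{L²} = ⟨u, 𝒫[R̂]v⟩_{L²}; that is, the L² adjoint of a 3-PI operator is the 3-PI operator with parameters {R̂₀, R̂₁, R̂₂}. (Closure of the 3-PI class under adjoints, used throughout the paper.)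 -/
open MeasureTheory Set intervalIntegral Matrix

noncomputable section

/-- The 3-PI operator `𝒫[R]` with parameters `R = {R₀, R₁, R₂}`:
`(𝒫[R]u)(x) = R₀(x)u(x) + ∫ₐˣ R₁(x,θ)u(θ)dθ + ∫ₓᵇ R₂(x,θ)u(θ)dθ`. -/
def P3op (a b : ℝ) {m n : ℕ} (R0 : ℝ → Matrix (Fin m) (Fin n) ℝ)
    (R1 R2 : ℝ → ℝ → Matrix (Fin m) (Fin n) ℝ)
    (u : ℝ → Fin n → ℝ) (x : ℝ) : Fin m → ℝ :=
  (R0 x).mulVec (u x) + (∫ θ in a..x, (R1 x θ).mulVec (u θ))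
    + ∫ θ in x..b, (R2 x θ).mulVec (u θ)

end

section AuxiliaryLemmas

variable {α : Type*} [MeasurableSpace α] {μ : Measure α}

lemma memLp_mul_integrable {f g : α → ℝ} (hf : MemLp f 2 μ) (hg : MemLp g 2 μ) :
    Integrable (fun x => f x * g x) μ := by
  have h : MemLp (f • g) 1 μ := hg.smul hf
  exact memLp_one_iff_integrable.mp h

lemma integrable_apply' {k : ℕ} {g : α → Fin k → ℝ} (hg : Integrable g μ) (i : Fin k) :
    Integrable (fun x => g x i) μ :=
  (ContinuousLinearMap.proj (R := ℝ) (φ := fun _ : Fin k => ℝ) i).integrable_comp hg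

lemma integral_apply'' {k : ℕ} {g : α → Fin k → ℝ} (hg : Integrable g μ) (i : Fin k) :
    (∫ x, g x ∂μ) i = ∫ x, g x i ∂μ :=
  ((ContinuousLinearMap.proj (R := ℝ) (φ := fun _ : Fin k => ℝ) i).integral_comp_comm hg).symm

lemma dotProduct_integral {k : ℕ} (w : Fin k → ℝ) {g : α → Fin k → ℝ} (hg : Integrable g μ) :
    w ⬝ᵥ (∫ x, g x ∂μ) = ∫ x, w ⬝ᵥ g x ∂μ := by
  simp only [dotProduct]
  rw [integral_finset_sum _ (fun i _ => ((integrable_apply' hg i).const_mul (w i)))]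
  refine Finset.sum_congr rfl fun i _ => ?_
  rw [integral_apply'' hg i, MeasureTheory.integral_const_mul]

lemma integral_dotProduct {k : ℕ} (w : Fin k → ℝ) {g : α → Fin k → ℝ} (hg : Integrable g μ) :
    (∫ x, g x ∂μ) ⬝ᵥ w = ∫ x, g x ⬝ᵥ w ∂μ := by
  rw [dotProduct_comm, dotProduct_integral w hg]
  exact integral_congr_ae (Filter.Eventually.of_forall fun y => dotProduct_comm _ _)

lemma integrable_of_components {k : ℕ} {g : α → Fin k → ℝ}
    (hgc : ∀ i, Integrable (fun x => g x i) μ) : Integrable g μ := by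
  have h : Integrable (fun x => ∑ i : Fin k, g x i • (Pi.single i 1 : Fin k → ℝ)) μ :=
    integrable_finset_sum _ (fun i _ => (hgc i).smul_const _)
  refine h.congr (Filter.Eventually.of_forall fun x => ?_)
  ext k'
  simp [Pi.single_apply]

lemma mulVec_dot {m n : ℕ} (M : Matrix (Fin m) (Fin n) ℝ) (w : Fin n → ℝ) (z : Fin m → ℝ) :
    (M.mulVec w) ⬝ᵥ z = w ⬝ᵥ (Mᵀ.mulVec z) := by
  rw [Matrix.dotProduct_mulVec, Matrix.vecMul_transpose, dotProduct_comm]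

lemma dot_expand {m n : ℕ} (M : Matrix (Fin m) (Fin n) ℝ) (w : Fin n → ℝ) (z : Fin m → ℝ) :
    (M.mulVec w) ⬝ᵥ z = ∑ i, ∑ j, M i j * (w j * z i) := by
  simp [Matrix.mulVec, dotProduct, Finset.sum_mul, mul_assoc]

lemma key_swap (a b : ℝ) (hab : a ≤ b) {m n : ℕ}
    (f : ℝ → ℝ → Matrix (Fin m) (Fin n) ℝ)
    (hfs : ∀ i j, MemLp (fun q : ℝ × ℝ => f q.1 q.2 i j) 2
        ((volume.restrict (Icc a b)).prod (volume.restrict (Icc a b))))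
    (u : ℝ → Fin n → ℝ) (hu : MemLp u 2 (volume.restrict (Icc a b)))
    (v : ℝ → Fin m → ℝ) (hv : MemLp v 2 (volume.restrict (Icc a b))) :
    Integrable (fun x => (∫ θ in a..x, (f x θ).mulVec (u θ)) ⬝ᵥ v x)
        (volume.restrict (Icc a b)) ∧
    Integrable (fun θ => u θ ⬝ᵥ (∫ x in θ..b, (f x θ)ᵀ.mulVec (v x)))
        (volume.restrict (Icc a b)) ∧
    (∫ x in Icc a b, (∫ θ in a..x, (f x θ).mulVec (u θ)) ⬝ᵥ v x)
      = ∫ θ in Icc a b, u θ ⬝ᵥ (∫ x in θ..b, (f x θ)ᵀ.mulVec (v x)) := by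
  set μ : Measure ℝ := volume.restrict (Icc a b) with hμ
  have hfin : IsFiniteMeasure μ := by
    constructor
    rw [hμ, Measure.restrict_apply_univ]
    exact measure_Icc_lt_top
  -- components of u and v
  have hui : ∀ j, MemLp (fun x => u x j) 2 μ := fun j =>
    (ContinuousLinearMap.proj (R := ℝ) (φ := fun _ : Fin n => ℝ) j).comp_memLp' hu
  have hvi : ∀ i, MemLp (fun x => v x i) 2 μ := fun i =>
    (ContinuousLinearMap.proj (R := ℝ) (φ := fun _ : Fin m => ℝ) i).comp_memLp' hv
  -- lifts to the product space
  have huP : ∀ j, MemLp (fun q : ℝ × ℝ => u q.2 j) 2 (μ.prod μ) := by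
    intro j
    refine (memLp_two_iff_integrable_sq ((hui j).1.comp_snd)).mpr ?_
    have h1 : Integrable (fun q : ℝ × ℝ => (1 : ℝ) * (u q.2 j) ^ 2) (μ.prod μ) :=
      Integrable.mul_prod (integrable_const 1) (hui j).integrable_sq
    exact h1.congr (Filter.Eventually.of_forall fun q => by ring)
  have hvP : ∀ i, MemLp (fun q : ℝ × ℝ => v q.1 i) 2 (μ.prod μ) := by
    intro i
    refine (memLp_two_iff_integrable_sq ((hvi i).1.comp_fst)).mpr ?_
    have h1 : Integrable (fun q : ℝ × ℝ => (v q.1 i) ^ 2 * (1 : ℝ)) (μ.prod μ) :=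
      Integrable.mul_prod (hvi i).integrable_sq (integrable_const 1)
    exact h1.congr (Filter.Eventually.of_forall fun q => by ring)
  have huvP : ∀ i j, MemLp (fun q : ℝ × ℝ => u q.2 j * v q.1 i) 2 (μ.prod μ) := by
    intro i j
    refine (memLp_two_iff_integrable_sq ((hui j).1.comp_snd.mul (hvi i).1.comp_fst)).mpr ?_
    have h1 : Integrable (fun q : ℝ × ℝ => (v q.1 i) ^ 2 * (u q.2 j) ^ 2) (μ.prod μ) :=
      Integrable.mul_prod (hvi i).integrable_sq (hui j).integrable_sq
    exact h1.congr (Filter.Eventually.of_forall fun q => by simp only [Pi.mul_apply]; ring)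
  -- the full scalar integrand and its truncation
  set Hfull : ℝ × ℝ → ℝ := fun q => ((f q.1 q.2).mulVec (u q.2)) ⬝ᵥ v q.1 with hHfull
  have hH : Integrable Hfull (μ.prod μ) := by
    have h1 : Integrable (fun q : ℝ × ℝ => ∑ i, ∑ j, f q.1 q.2 i j * (u q.2 j * v q.1 i))
        (μ.prod μ) :=
      integrable_finset_sum _ (fun i _ => integrable_finset_sum _
        (fun j _ => memLp_mul_integrable (hfs i j) (huvP i j)))
    exact h1.congr (Filter.Eventually.of_forall fun q => (dot_expand _ _ _).symm)
  set G : ℝ × ℝ → ℝ := {q : ℝ × ℝ | q.2 ≤ q.1}.indicator Hfull with hG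
  have hGset : MeasurableSet {q : ℝ × ℝ | q.2 ≤ q.1} :=
    measurableSet_le measurable_snd measurable_fst
  have hGint : Integrable G (μ.prod μ) := hH.indicator hGset
  -- slicewise integrability of the vector integrands
  have hgu : Integrable (fun q : ℝ × ℝ => (f q.1 q.2).mulVec (u q.2)) (μ.prod μ) := by
    refine integrable_of_components fun i => ?_
    have h1 : Integrable (fun q : ℝ × ℝ => ∑ j, f q.1 q.2 i j * u q.2 j) (μ.prod μ) :=
      integrable_finset_sum _ (fun j _ => memLp_mul_integrable (hfs i j) (huP j))
    exact h1.congr (Filter.Eventually.of_forall fun q => by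
      simp [Matrix.mulVec, dotProduct])
  have hgv : Integrable (fun q : ℝ × ℝ => (f q.1 q.2)ᵀ.mulVec (v q.1)) (μ.prod μ) := by
    refine integrable_of_components fun j => ?_
    have h1 : Integrable (fun q : ℝ × ℝ => ∑ i, f q.1 q.2 i j * v q.1 i) (μ.prod μ) :=
      integrable_finset_sum _ (fun i _ => memLp_mul_integrable (hfs i j) (hvP i))
    exact h1.congr (Filter.Eventually.of_forall fun q => by
      simp [Matrix.mulVec, dotProduct, Matrix.transpose_apply])
  -- Claim A
  have claimA : (fun x => (∫ θ in a..x, (f x θ).mulVec (u θ)) ⬝ᵥ v x)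
      =ᵐ[μ] (fun x => ∫ θ, G (x, θ) ∂μ) := by
    have hae := hgu.prod_right_ae
    rw [hμ]
    filter_upwards [hgu.prod_right_ae, ae_restrict_mem measurableSet_Icc] with x hx hxS
    have hsub : Ioc a x ⊆ Icc a b := fun y hy => ⟨le_of_lt hy.1, hy.2.trans hxS.2⟩
    have hxint : IntegrableOn (fun θ => (f x θ).mulVec (u θ)) (Ioc a x) volume :=
      IntegrableOn.mono_set hx hsub
    have hIicIcc : Iic x ∩ Icc a b = Icc a x := by
      ext y
      constructor
      · rintro ⟨h1, h2, _⟩; exact ⟨h2, h1⟩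
      · rintro ⟨h1, h2⟩; exact ⟨h2, h1, h2.trans hxS.2⟩
    calc (∫ θ in a..x, (f x θ).mulVec (u θ)) ⬝ᵥ v x
        = (∫ θ in Ioc a x, (f x θ).mulVec (u θ)) ⬝ᵥ v x := by
          rw [intervalIntegral.integral_of_le hxS.1]
      _ = ∫ θ in Ioc a x, ((f x θ).mulVec (u θ)) ⬝ᵥ v x := integral_dotProduct _ hxint
      _ = ∫ θ in Icc a x, Hfull (x, θ) := (integral_Icc_eq_integral_Ioc).symm
      _ = ∫ θ in Iic x, Hfull (x, θ) ∂(volume.restrict (Icc a b)) := by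
          rw [Measure.restrict_restrict measurableSet_Iic, hIicIcc]
      _ = ∫ θ, G (x, θ) ∂(volume.restrict (Icc a b)) := by
          rw [← MeasureTheory.integral_indicator measurableSet_Iic]
          refine integral_congr_ae (Filter.Eventually.of_forall fun θ => ?_)
          simp only [hG, Set.indicator_apply, Set.mem_Iic, Set.mem_setOf_eq]
  -- Claim B
  have claimB : (fun θ => ∫ x, G (x, θ) ∂μ)
      =ᵐ[μ] (fun θ => u θ ⬝ᵥ (∫ x in θ..b, (f x θ)ᵀ.mulVec (v x))) := by
    rw [hμ]
    filter_upwards [hgv.prod_left_ae, ae_restrict_mem measurableSet_Icc] with θ hθ hθS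
    have hsub : Icc θ b ⊆ Icc a b := Icc_subset_Icc hθS.1 le_rfl
    have hxint : IntegrableOn (fun x => (f x θ)ᵀ.mulVec (v x)) (Icc θ b) volume :=
      IntegrableOn.mono_set hθ hsub
    have hIciIcc : Ici θ ∩ Icc a b = Icc θ b := by
      ext y
      constructor
      · rintro ⟨h1, _, h3⟩; exact ⟨h1, h3⟩
      · rintro ⟨h1, h2⟩; exact ⟨h1, hθS.1.trans h1, h2⟩
    calc ∫ x, G (x, θ) ∂(volume.restrict (Icc a b))
        = ∫ x in Ici θ, Hfull (x, θ) ∂(volume.restrict (Icc a b)) := by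
          rw [← MeasureTheory.integral_indicator measurableSet_Ici]
          refine integral_congr_ae (Filter.Eventually.of_forall fun x => ?_)
          simp only [hG, Set.indicator_apply, Set.mem_Ici, Set.mem_setOf_eq]
      _ = ∫ x in Icc θ b, Hfull (x, θ) := by
          rw [Measure.restrict_restrict measurableSet_Ici, hIciIcc]
      _ = ∫ x in Icc θ b, u θ ⬝ᵥ ((f x θ)ᵀ.mulVec (v x)) := by
          refine integral_congr_ae (Filter.Eventually.of_forall fun x => ?_)
          simp only [hHfull]
          exact mulVec_dot _ _ _
      _ = u θ ⬝ᵥ (∫ x in Icc θ b, (f x θ)ᵀ.mulVec (v x)) := (dotProduct_integral _ hxint).symm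
      _ = u θ ⬝ᵥ (∫ x in θ..b, (f x θ)ᵀ.mulVec (v x)) := by
          rw [intervalIntegral.integral_of_le hθS.2, integral_Icc_eq_integral_Ioc]
  -- assemble
  have hI1 : Integrable (fun x => ∫ θ, G (x, θ) ∂μ) μ := hGint.integral_prod_left
  have hI2 : Integrable (fun θ => ∫ x, G (x, θ) ∂μ) μ := hGint.integral_prod_right
  refine ⟨hI1.congr claimA.symm, hI2.congr claimB, ?_⟩
  calc ∫ x, (∫ θ in a..x, (f x θ).mulVec (u θ)) ⬝ᵥ v x ∂μ
      = ∫ x, ∫ θ, G (x, θ) ∂μ ∂μ := integral_congr_ae claimA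
    _ = ∫ θ, ∫ x, G (x, θ) ∂μ ∂μ := integral_integral_swap hGint
    _ = ∫ θ, u θ ⬝ᵥ (∫ x in θ..b, (f x θ)ᵀ.mulVec (v x)) ∂μ := integral_congr_ae claimB

end AuxiliaryLemmas

/-- closure of the 3-PI class under adjoints: for all `u, v ∈ L²`,
`⟨𝒫[R]u, v⟩ = ⟨u, 𝒫[R̂]v⟩`, where `R̂₀(x) = R₀(x)ᵀ`, `R̂₁(x,θ) = R₂(θ,x)ᵀ`,
`R̂₂(x,θ) = R₁(θ,x)ᵀ`. -/
theorem statement16 (a b : ℝ) (hab : a < b) (m n : ℕ) (hm : 1 ≤ m) (hn : 1 ≤ n)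
    (R0 : ℝ → Matrix (Fin m) (Fin n) ℝ)
    (hR0meas : ∀ i j, Measurable fun x => R0 x i j)
    (hR0bdd : ∃ C, ∀ x ∈ Icc a b, ∀ i j, |R0 x i j| ≤ C)
    (R1 R2 : ℝ → ℝ → Matrix (Fin m) (Fin n) ℝ)
    (hR1meas : ∀ i j, Measurable fun q : ℝ × ℝ => R1 q.1 q.2 i j)
    (hR2meas : ∀ i j, Measurable fun q : ℝ × ℝ => R2 q.1 q.2 i j)
    (hR1sq : ∀ i j, IntegrableOn (fun q : ℝ × ℝ => (R1 q.1 q.2 i j) ^ 2)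
      (Icc a b ×ˢ Icc a b))
    (hR2sq : ∀ i j, IntegrableOn (fun q : ℝ × ℝ => (R2 q.1 q.2 i j) ^ 2)
      (Icc a b ×ˢ Icc a b))
    (u : ℝ → Fin n → ℝ) (hu : MemLp u 2 (volume.restrict (Icc a b)))
    (v : ℝ → Fin m → ℝ) (hv : MemLp v 2 (volume.restrict (Icc a b))) :
    (∫ x in Icc a b, P3op a b R0 R1 R2 u x ⬝ᵥ v x)
      = ∫ x in Icc a b,
          u x ⬝ᵥ P3op a b (fun x => (R0 x)ᵀ) (fun x θ => (R2 θ x)ᵀ)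
            (fun x θ => (R1 θ x)ᵀ) v x := by
  have hab' : a ≤ b := hab.le
  have hμ : (volume.restrict (Icc a b)) = volume.restrict (Icc a b) := rfl
  have hprodμ : (volume.restrict (Icc a b)).prod (volume.restrict (Icc a b)) = (volume : Measure (ℝ × ℝ)).restrict (Icc a b ×ˢ Icc a b) := by
    rw [Measure.prod_restrict, ← Measure.volume_eq_prod]
  -- MemLp of the kernels on the product space
  have hfs1 : ∀ i j, MemLp (fun q : ℝ × ℝ => R1 q.1 q.2 i j) 2 ((volume.restrict (Icc a b)).prod (volume.restrict (Icc a b))) := by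
    intro i j
    refine (memLp_two_iff_integrable_sq ((hR1meas i j).aestronglyMeasurable)).mpr ?_
    rw [hprodμ]
    exact hR1sq i j
  have hfs2' : ∀ i j, MemLp (fun q : ℝ × ℝ => (R2 q.2 q.1)ᵀ i j) 2 ((volume.restrict (Icc a b)).prod (volume.restrict (Icc a b))) := by
    intro i j
    have hm2 : Measurable fun q : ℝ × ℝ => R2 q.2 q.1 j i :=
      (hR2meas j i).comp measurable_swap
    refine (memLp_two_iff_integrable_sq hm2.aestronglyMeasurable).mpr ?_
    have h1 : Integrable (fun q : ℝ × ℝ => (R2 q.1 q.2 j i) ^ 2) ((volume.restrict (Icc a b)).prod (volume.restrict (Icc a b))) := by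
      rw [hprodμ]; exact hR2sq j i
    exact h1.swap
  -- components of u and v
  have hui : ∀ j, MemLp (fun x => u x j) 2 (volume.restrict (Icc a b)) := fun j =>
    (ContinuousLinearMap.proj (R := ℝ) (φ := fun _ : Fin n => ℝ) j).comp_memLp' hu
  have hvi : ∀ i, MemLp (fun x => v x i) 2 (volume.restrict (Icc a b)) := fun i =>
    (ContinuousLinearMap.proj (R := ℝ) (φ := fun _ : Fin m => ℝ) i).comp_memLp' hv
  -- the multiplier term
  have hT0 : Integrable (fun x => ((R0 x).mulVec (u x)) ⬝ᵥ v x) (volume.restrict (Icc a b)) := by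
    obtain ⟨C, hC⟩ := hR0bdd
    have hterm : ∀ (i : Fin m) (j : Fin n),
        Integrable (fun x => R0 x i j * (u x j * v x i)) (volume.restrict (Icc a b)) := by
      intro i j
      have hmul : Integrable (fun x => u x j * v x i) (volume.restrict (Icc a b)) :=
        memLp_mul_integrable (hui j) (hvi i)
      refine Integrable.mono' ((hmul.abs.const_mul C)) 
        ((hR0meas i j).aestronglyMeasurable.mul hmul.1) ?_
      filter_upwards [ae_restrict_mem measurableSet_Icc] with x hx
      rw [Real.norm_eq_abs, abs_mul]
      exact mul_le_mul_of_nonneg_right (hC x hx i j) (abs_nonneg _)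
    have h1 : Integrable (fun x => ∑ i, ∑ j, R0 x i j * (u x j * v x i)) (volume.restrict (Icc a b)) :=
      integrable_finset_sum _ (fun i _ => integrable_finset_sum _ (fun j _ => hterm i j))
    exact h1.congr (Filter.Eventually.of_forall fun x => (dot_expand _ _ _).symm)
  -- the two key swaps
  obtain ⟨hK1a, hK1b, hK1⟩ := key_swap a b hab' R1 hfs1 u hu v hv
  obtain ⟨hK2a, hK2b, hK2⟩ := key_swap a b hab' (fun x θ => (R2 θ x)ᵀ) hfs2' v hv u hu
  -- identify the R2 pieces
  have hT2 : Integrable (fun x => (∫ θ in x..b, (R2 x θ).mulVec (u θ)) ⬝ᵥ v x) (volume.restrict (Icc a b)) := by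
    refine hK2b.congr (Filter.Eventually.of_forall fun θ => ?_)
    simp only [Matrix.transpose_transpose]
    exact dotProduct_comm _ _
  have hS1 : Integrable (fun x => u x ⬝ᵥ (∫ θ in a..x, (R2 θ x)ᵀ.mulVec (v θ))) (volume.restrict (Icc a b)) := by
    refine hK2a.congr (Filter.Eventually.of_forall fun x => ?_)
    exact dotProduct_comm _ _
  have hS0 : Integrable (fun x => u x ⬝ᵥ ((R0 x)ᵀ.mulVec (v x))) (volume.restrict (Icc a b)) :=
    hT0.congr (Filter.Eventually.of_forall fun x => mulVec_dot _ _ _)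
  have hK2' : (∫ x in Icc a b, u x ⬝ᵥ (∫ θ in a..x, (R2 θ x)ᵀ.mulVec (v θ)))
      = ∫ x in Icc a b, (∫ θ in x..b, (R2 x θ).mulVec (u θ)) ⬝ᵥ v x := by
    calc (∫ x in Icc a b, u x ⬝ᵥ (∫ θ in a..x, (R2 θ x)ᵀ.mulVec (v θ)))
        = ∫ x in Icc a b, (∫ θ in a..x, (R2 θ x)ᵀ.mulVec (v θ)) ⬝ᵥ u x :=
          integral_congr_ae (Filter.Eventually.of_forall fun x =>
            dotProduct_comm _ _)
      _ = ∫ θ in Icc a b, v θ ⬝ᵥ (∫ x in θ..b, ((R2 θ x)ᵀ)ᵀ.mulVec (u x)) := hK2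
      _ = ∫ x in Icc a b, (∫ θ in x..b, (R2 x θ).mulVec (u θ)) ⬝ᵥ v x := by
          refine integral_congr_ae (Filter.Eventually.of_forall fun θ => ?_)
          simp only [Matrix.transpose_transpose]
          exact dotProduct_comm _ _
  -- expand both sides and conclude
  have hTsum : Integrable (fun x => ((R0 x).mulVec (u x)) ⬝ᵥ v x
      + (∫ θ in a..x, (R1 x θ).mulVec (u θ)) ⬝ᵥ v x) (volume.restrict (Icc a b)) :=
    hT0.add hK1a
  have hSsum : Integrable (fun x => u x ⬝ᵥ ((R0 x)ᵀ.mulVec (v x))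
      + u x ⬝ᵥ (∫ θ in a..x, (R2 θ x)ᵀ.mulVec (v θ))) (volume.restrict (Icc a b)) :=
    hS0.add hS1
  simp only [P3op, add_dotProduct, dotProduct_add]
  rw [integral_add hTsum hT2, integral_add hT0 hK1a,
    integral_add hSsum hK1b, integral_add hS0 hS1]
  have e0 : (∫ x in Icc a b, ((R0 x).mulVec (u x)) ⬝ᵥ v x)
      = ∫ x in Icc a b, u x ⬝ᵥ ((R0 x)ᵀ.mulVec (v x)) :=
    integral_congr_ae (Filter.Eventually.of_forall fun x => mulVec_dot _ _ _)
  rw [e0, hK1, ← hK2']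
  ring
end
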